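/- arXiv:1208.3154 — 11 statements merged into one kernel-verified Lean document; each statement's English description precedes it below -/
import Mathlib

section
/- Let U and W be Banach spaces and E, A : U → W bounded linear operators. If A(ker E) is closed in W, then the system (E, A) is normal (i.e., conditions (N1) and (N2) hold) if and only if the subspace closure(A(ker E)) + closure(ran E) is closed in W. -/
/-- If `A(ker E)` is closed, then the system `(E, A)` is normal
(conditions (N1) and (N2)) iff `closure(A(ker E)) + closure(ran E)` is closed in `W`. -/
theorem normal_iff_isClosed_sup_of_isClosed_map_ker
    {U W : Type*} [NormedAddCommGroup U] [NormedSpace ℝ U] [CompleteSpace U]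
    [NormedAddCommGroup W] [NormedSpace ℝ W] [CompleteSpace W]
    (E A : U →L[ℝ] W)
    (h : IsClosed ((Submodule.map (A : U →ₗ[ℝ] W) (LinearMap.ker (E : U →ₗ[ℝ] W))) : Set W)) :
    (((LinearMap.range (E : U →ₗ[ℝ] W)).topologicalClosure ⊔ Submodule.map (A : U →ₗ[ℝ] W) (LinearMap.ker (E : U →ₗ[ℝ] W))
        = (LinearMap.range (E : U →ₗ[ℝ] W) ⊔ Submodule.map (A : U →ₗ[ℝ] W) (LinearMap.ker (E : U →ₗ[ℝ] W))).topologicalClosure)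
      ∧ (((LinearMap.range (E : U →ₗ[ℝ] W)).topologicalClosure ⊓
            Submodule.map (A : U →ₗ[ℝ] W) (LinearMap.ker (E : U →ₗ[ℝ] W))).topologicalClosure
          = (LinearMap.range (E : U →ₗ[ℝ] W)).topologicalClosure ⊓
            (Submodule.map (A : U →ₗ[ℝ] W) (LinearMap.ker (E : U →ₗ[ℝ] W))).topologicalClosure))
    ↔ IsClosed (((Submodule.map (A : U →ₗ[ℝ] W) (LinearMap.ker (E : U →ₗ[ℝ] W))).topologicalClosure ⊔
        (LinearMap.range (E : U →ₗ[ℝ] W)).topologicalClosure : Submodule ℝ W) : Set W) := by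
  set M := Submodule.map (A : U →ₗ[ℝ] W) (LinearMap.ker (E : U →ₗ[ℝ] W)) with hMdef
  set R := LinearMap.range (E : U →ₗ[ℝ] W) with hRdef
  have hM : M.topologicalClosure = M := h.submodule_topologicalClosure_eq
  have hsup : ((M.topologicalClosure ⊔ R.topologicalClosure : Submodule ℝ W) : Set W)
      = ((R.topologicalClosure ⊔ M : Submodule ℝ W) : Set W) := by
    rw [hM, sup_comm]
  constructor
  · rintro ⟨h1, _⟩
    rw [hsup, h1]
    exact (R ⊔ M).isClosed_topologicalClosure
  · intro hcl
    rw [hsup] at hcl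
    constructor
    · apply le_antisymm
      · exact sup_le
          (Submodule.topologicalClosure_mono le_sup_left)
          (le_trans le_sup_right (R ⊔ M).le_topologicalClosure)
      · exact Submodule.topologicalClosure_minimal _
          (sup_le_sup_right R.le_topologicalClosure M) hcl
    · have hinter : IsClosed ((R.topologicalClosure ⊓ M : Submodule ℝ W) : Set W) :=
        R.isClosed_topologicalClosure.inter h
      rw [hM, hinter.submodule_topologicalClosure_eq]
end

section
/- Let U and W be Banach spaces and E, A : U → W bounded linear operators. Assume (N1): closure(ran E) + A(ker E) = closure(ran E + A(ker E)), and assume the strengthened intersection condition A(ker E) ∩ closure(ran E) = closure(A(ker E)) ∩ closure(ran E). Then A(ker E) is closed in W. -/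
/-- Assume (N1) `closure(ran E) + A(ker E) = closure(ran E + A(ker E))` and
the strengthened intersection condition
`A(ker E) ∩ closure(ran E) = closure(A(ker E)) ∩ closure(ran E)`.
Then `A(ker E)` is closed in `W`. -/
theorem isClosed_map_ker_of_normal_strong
    {U W : Type*} [NormedAddCommGroup U] [NormedSpace ℝ U] [CompleteSpace U]
    [NormedAddCommGroup W] [NormedSpace ℝ W] [CompleteSpace W]
    (E A : U →L[ℝ] W)
    (hN1 : (LinearMap.range (E : U →ₗ[ℝ] W)).topologicalClosure ⊔ Submodule.map (A : U →ₗ[ℝ] W) (LinearMap.ker (E : U →ₗ[ℝ] W))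
        = (LinearMap.range (E : U →ₗ[ℝ] W) ⊔ Submodule.map (A : U →ₗ[ℝ] W) (LinearMap.ker (E : U →ₗ[ℝ] W))).topologicalClosure)
    (hInt : Submodule.map (A : U →ₗ[ℝ] W) (LinearMap.ker (E : U →ₗ[ℝ] W)) ⊓ (LinearMap.range (E : U →ₗ[ℝ] W)).topologicalClosure
        = (Submodule.map (A : U →ₗ[ℝ] W) (LinearMap.ker (E : U →ₗ[ℝ] W))).topologicalClosure ⊓
          (LinearMap.range (E : U →ₗ[ℝ] W)).topologicalClosure) :
    IsClosed ((Submodule.map (A : U →ₗ[ℝ] W) (LinearMap.ker (E : U →ₗ[ℝ] W))) : Set W) := by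
  set M := Submodule.map (A : U →ₗ[ℝ] W) (LinearMap.ker (E : U →ₗ[ℝ] W)) with hM
  have key : M.topologicalClosure = M := by
    refine le_antisymm ?_ M.le_topologicalClosure
    intro w hw
    have hw' : w ∈ (LinearMap.range (E : U →ₗ[ℝ] W) ⊔ M).topologicalClosure :=
      Submodule.topologicalClosure_mono le_sup_right hw
    rw [← hN1] at hw'
    obtain ⟨r, hr, m, hm, hrm⟩ := Submodule.mem_sup.mp hw'
    have hrM : r ∈ M.topologicalClosure := by
      have : r = w - m := by rw [← hrm]; abel
      rw [this]
      exact sub_mem hw (M.le_topologicalClosure hm)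
    have : r ∈ M ⊓ (LinearMap.range (E : U →ₗ[ℝ] W)).topologicalClosure := by
      rw [hInt]; exact ⟨hrM, hr⟩
    have hrM' : r ∈ M := this.1
    rw [← hrm]
    exact add_mem hrM' hm
  rw [← key]
  exact M.isClosed_topologicalClosure
end

section
/- Let U and W be Banach spaces, E, A : U → W bounded linear operators, and U₁ := {u ∈ U : A u ∈ closure(ran E)}. Let J_U : U₁ ⧸ (ker E ∩ U₁) → U ⧸ ker E be the continuous linear map induced by the inclusion U₁ ⊆ U (sending u + (ker E ∩ U₁) to u + ker E). Then: (a) J_U is injective; (b) the range of J_U is contained in the set {u + ker E : A u ∈ closure(ran E + A(ker E))}; (c) if condition (N1): closure(ran E) + A(ker E) = closure(ran E + A(ker E)) holds, then the range of J_U equals {u + ker E : A u ∈ closure(ran E + A(ker E))}. Equivalently for (c): for every u ∈ U with A u ∈ closure(ran E + A(ker E)) there exists k ∈ ker E with A(u − k) ∈ closure(ran E). -/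
/-- Let `U₁ = {u : A u ∈ closure (ran E)}` and let
`J_U : U₁ ⧸ (ker E ∩ U₁) → U ⧸ ker E` be the (unique) continuous linear map induced by
the inclusion `U₁ ⊆ U`.  Then `J_U` is injective, its range is contained in the subspace
`{u + ker E : A u ∈ closure(ran E + A(ker E))}` of `U ⧸ ker E`, and under condition (N1)
its range equals that subspace. -/
theorem JU_injective_range
    {U W : Type*} [NormedAddCommGroup U] [NormedSpace ℝ U] [CompleteSpace U]
    [NormedAddCommGroup W] [NormedSpace ℝ W] [CompleteSpace W]
    (E A : U →L[ℝ] W)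
    (JU : (↥(Submodule.comap (A : U →ₗ[ℝ] W) (LinearMap.range (E : U →ₗ[ℝ] W)).topologicalClosure) ⧸
            Submodule.comap
              (Submodule.comap (A : U →ₗ[ℝ] W) (LinearMap.range (E : U →ₗ[ℝ] W)).topologicalClosure).subtype
              (LinearMap.ker (E : U →ₗ[ℝ] W)))
          →L[ℝ] (U ⧸ LinearMap.ker (E : U →ₗ[ℝ] W)))
    (hJU : ∀ u : ↥(Submodule.comap (A : U →ₗ[ℝ] W) (LinearMap.range (E : U →ₗ[ℝ] W)).topologicalClosure),
        JU (Submodule.Quotient.mk u) = Submodule.Quotient.mk (u : U)) :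
    Function.Injective JU
    ∧ LinearMap.range JU.toLinearMap ≤
        Submodule.map (LinearMap.ker (E : U →ₗ[ℝ] W)).mkQ
          (Submodule.comap (A : U →ₗ[ℝ] W)
            (LinearMap.range (E : U →ₗ[ℝ] W) ⊔ Submodule.map (A : U →ₗ[ℝ] W) (LinearMap.ker (E : U →ₗ[ℝ] W))).topologicalClosure)
    ∧ ((LinearMap.range (E : U →ₗ[ℝ] W)).topologicalClosure ⊔ Submodule.map (A : U →ₗ[ℝ] W) (LinearMap.ker (E : U →ₗ[ℝ] W))
          = (LinearMap.range (E : U →ₗ[ℝ] W) ⊔ Submodule.map (A : U →ₗ[ℝ] W) (LinearMap.ker (E : U →ₗ[ℝ] W))).topologicalClosure →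
        LinearMap.range JU.toLinearMap =
          Submodule.map (LinearMap.ker (E : U →ₗ[ℝ] W)).mkQ
            (Submodule.comap (A : U →ₗ[ℝ] W)
              (LinearMap.range (E : U →ₗ[ℝ] W) ⊔ Submodule.map (A : U →ₗ[ℝ] W) (LinearMap.ker (E : U →ₗ[ℝ] W))).topologicalClosure)) := by
  have hranle : (LinearMap.range (E : U →ₗ[ℝ] W)).topologicalClosure ≤
      (LinearMap.range (E : U →ₗ[ℝ] W) ⊔ Submodule.map (A : U →ₗ[ℝ] W) (LinearMap.ker (E : U →ₗ[ℝ] W))).topologicalClosure :=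
    Submodule.topologicalClosure_mono le_sup_left
  have hrange_le : LinearMap.range JU.toLinearMap ≤
      Submodule.map (LinearMap.ker (E : U →ₗ[ℝ] W)).mkQ
        (Submodule.comap (A : U →ₗ[ℝ] W)
          (LinearMap.range (E : U →ₗ[ℝ] W) ⊔ Submodule.map (A : U →ₗ[ℝ] W) (LinearMap.ker (E : U →ₗ[ℝ] W))).topologicalClosure) := by
    rintro y ⟨q, rfl⟩
    induction q using Submodule.Quotient.induction_on with
    | _ u =>
      rw [ContinuousLinearMap.coe_coe, hJU u]
      exact ⟨u, hranle u.2, rfl⟩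
  refine ⟨?_, hrange_le, ?_⟩
  · intro q₁ q₂ h
    induction q₁ using Submodule.Quotient.induction_on with
    | _ u₁ =>
    induction q₂ using Submodule.Quotient.induction_on with
    | _ u₂ =>
      rw [hJU u₁, hJU u₂] at h
      rw [Submodule.Quotient.eq] at h ⊢
      exact h
  · intro hN1
    refine le_antisymm hrange_le ?_
    rintro y ⟨u, hu, rfl⟩
    rw [← hN1] at hu
    obtain ⟨c, hc, d, hd, hcd⟩ := Submodule.mem_sup.mp hu
    obtain ⟨k, hk, rfl⟩ := hd
    have hmem : u - k ∈ Submodule.comap (A : U →ₗ[ℝ] W) (LinearMap.range (E : U →ₗ[ℝ] W)).topologicalClosure := by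
      have : A (u - k) = c := by
        simp only [map_sub]
        simp only [ContinuousLinearMap.coe_coe] at hcd; rw [← hcd]; abel
      simpa [Submodule.mem_comap, this] using hc
    refine ⟨Submodule.Quotient.mk ⟨u - k, hmem⟩, ?_⟩
    rw [ContinuousLinearMap.coe_coe, hJU]
    simp only [Submodule.mkQ_apply]
    rw [Submodule.Quotient.eq]
    simpa using Submodule.neg_mem _ hk
end

section
/- Let U and W be Banach spaces, E, A : U → W bounded linear operators, and U₁ := {u ∈ U : A u ∈ closure(ran E)}. (a) If A(ker E) is closed in W, then A(ker E ∩ U₁) is closed in W. (b) If conditions (N1): closure(ran E) + A(ker E) = closure(ran E + A(ker E)) and (N2): closure(closure(ran E) ∩ A(ker E)) = closure(ran E) ∩ closure(A(ker E)) hold and A(ker E ∩ U₁) is closed in W, then A(ker E) is closed in W. -/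
/-- With `U₁ = {u : A u ∈ closure(ran E)}`:
(a) if `A(ker E)` is closed then `A(ker E ∩ U₁)` is closed;
(b) under conditions (N1) and (N2), if `A(ker E ∩ U₁)` is closed then `A(ker E)` is closed. -/
theorem isClosed_map_ker_transfer
    {U W : Type*} [NormedAddCommGroup U] [NormedSpace ℝ U] [CompleteSpace U]
    [NormedAddCommGroup W] [NormedSpace ℝ W] [CompleteSpace W]
    (E A : U →L[ℝ] W) :
    (IsClosed (((Submodule.map (A : U →ₗ[ℝ] W) (LinearMap.ker (E : U →ₗ[ℝ] W)) : Submodule ℝ W)) : Set W) →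
      IsClosed (((Submodule.map (A : U →ₗ[ℝ] W) (LinearMap.ker (E : U →ₗ[ℝ] W) ⊓
        Submodule.comap (A : U →ₗ[ℝ] W) (LinearMap.range (E : U →ₗ[ℝ] W)).topologicalClosure) : Submodule ℝ W)) : Set W))
    ∧ ((LinearMap.range (E : U →ₗ[ℝ] W)).topologicalClosure ⊔ Submodule.map (A : U →ₗ[ℝ] W) (LinearMap.ker (E : U →ₗ[ℝ] W))
          = (LinearMap.range (E : U →ₗ[ℝ] W) ⊔ Submodule.map (A : U →ₗ[ℝ] W) (LinearMap.ker (E : U →ₗ[ℝ] W))).topologicalClosure →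
        ((LinearMap.range (E : U →ₗ[ℝ] W)).topologicalClosure ⊓
            Submodule.map (A : U →ₗ[ℝ] W) (LinearMap.ker (E : U →ₗ[ℝ] W))).topologicalClosure
          = (LinearMap.range (E : U →ₗ[ℝ] W)).topologicalClosure ⊓
            (Submodule.map (A : U →ₗ[ℝ] W) (LinearMap.ker (E : U →ₗ[ℝ] W))).topologicalClosure →
        IsClosed (((Submodule.map (A : U →ₗ[ℝ] W) (LinearMap.ker (E : U →ₗ[ℝ] W) ⊓
          Submodule.comap (A : U →ₗ[ℝ] W) (LinearMap.range (E : U →ₗ[ℝ] W)).topologicalClosure) : Submodule ℝ W)) : Set W) →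
        IsClosed (((Submodule.map (A : U →ₗ[ℝ] W) (LinearMap.ker (E : U →ₗ[ℝ] W)) : Submodule ℝ W)) : Set W)) := by
  set M : Submodule ℝ W := Submodule.map (A : U →ₗ[ℝ] W) (LinearMap.ker (E : U →ₗ[ℝ] W)) with hM
  set C : Submodule ℝ W := (LinearMap.range (E : U →ₗ[ℝ] W)).topologicalClosure with hC
  have key : Submodule.map (A : U →ₗ[ℝ] W) (LinearMap.ker (E : U →ₗ[ℝ] W) ⊓ Submodule.comap (A : U →ₗ[ℝ] W) C) = M ⊓ C := by
    rw [hM, Submodule.map_inf_eq_map_inf_comap]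
  constructor
  · intro h
    rw [key]
    exact h.inter (Submodule.isClosed_topologicalClosure _)
  · intro hN1 hN2 h
    rw [key] at h
    -- C ⊓ M is closed, so by N2, C ⊓ closure M = C ⊓ M
    have hCM : IsClosed ((C ⊓ M : Submodule ℝ W) : Set W) := by
      rw [inf_comm]; exact h
    have h2 : C ⊓ M.topologicalClosure = C ⊓ M := by
      rw [← hN2, hCM.submodule_topologicalClosure_eq]
    have hsub : M.topologicalClosure ≤ M := by
      intro w hw
      have hw' : w ∈ C ⊔ M := by
        rw [hN1]
        exact Submodule.topologicalClosure_mono le_sup_right hw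
      rcases Submodule.mem_sup.mp hw' with ⟨c, hc, a, ha, rfl⟩
      have hcM : c ∈ M.topologicalClosure := by
        have := sub_mem hw (M.le_topologicalClosure ha)
        simpa using this
      have : c ∈ C ⊓ M := h2 ▸ ⟨hc, hcM⟩
      exact add_mem this.2 ha
    have : M.topologicalClosure = M :=
      le_antisymm hsub M.le_topologicalClosure
    rw [← this]
    exact Submodule.isClosed_topologicalClosure M
end

section
/- Let U and W be Banach spaces, E, A : U → W bounded linear operators, W₁ := closure(ran E), U₁ := {u ∈ U : A u ∈ closure(ran E)}, and assume the system (E, A) is normal, i.e., (N1): closure(ran E) + A(ker E) = closure(ran E + A(ker E)) and (N2): closure(closure(ran E) ∩ A(ker E)) = closure(ran E) ∩ closure(A(ker E)) hold. Let J_U : U₁ ⧸ (ker E ∩ U₁) → U ⧸ ker E and J_W : W₁ ⧸ closure(A(ker E ∩ U₁)) → W ⧸ closure(A(ker E)) be the continuous linear maps induced by the inclusions U₁ ⊆ U and W₁ ⊆ W. Then J_U is a Banach-space isomorphism (continuous bijection with continuous inverse) onto the closed subspace U' := {u + ker E : A u ∈ closure(ran E + A(ker E))} of U ⧸ ker E,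 J_W is a Banach-space isomorphism onto the closed subspace W' := closure of the image of ran E in W ⧸ closure(A(ker E)), and for every u ∈ U₁ one has J_W(E u + closure(A(ker E ∩ U₁))) = E u + closure(A(ker E)) and J_W(A u + closure(A(ker E ∩ U₁))) = A u + closure(A(ker E)); consequently the doubly reduced systems (E_cred1_ored1, A_cred1_ored1) and (E_ored1_cred1, A_ored1_cred1) are equivalent via (J_U, J_W). -/
set_option maxHeartbeats 2000000

theorem aux_closedEmbedding {X Y : Type*} [NormedAddCommGroup X] [NormedSpace ℝ X]
    [CompleteSpace X] [NormedAddCommGroup Y] [NormedSpace ℝ Y] [CompleteSpace Y]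
    (f : X →L[ℝ] Y) (hinj : Function.Injective f) (hclo : IsClosed (Set.range f)) :
    Topology.IsClosedEmbedding ⇑f := by
  have h1 : Topology.IsClosedEmbedding ((↑) : LinearMap.range (f : X →ₗ[ℝ] Y) → Y) := by
    have : IsClosed ((LinearMap.range (f : X →ₗ[ℝ] Y) : Submodule ℝ Y) : Set Y) := by
      rwa [LinearMap.coe_range]
    exact this.isClosedEmbedding_subtypeVal
  have h2 : Topology.IsClosedEmbedding ⇑(f.equivRange hinj hclo) :=
    (f.equivRange hinj hclo).toHomeomorph.isClosedEmbedding
  have : ⇑f = ((↑) : LinearMap.range (f : X →ₗ[ℝ] Y) → Y) ∘ ⇑(f.equivRange hinj hclo) := rfl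
  rw [this]
  exact h1.comp h2

theorem aux_isClosed_map_mkQ {V : Type*} [NormedAddCommGroup V] [NormedSpace ℝ V]
    (K S : Submodule ℝ V) (hKS : K ≤ S) (hS : IsClosed (S : Set V)) :
    IsClosed ((Submodule.map K.mkQ S : Submodule ℝ (V ⧸ K)) : Set (V ⧸ K)) := by
  have hq : Topology.IsQuotientMap ⇑K.mkQ := (Submodule.isOpenQuotientMap_mkQ K).isQuotientMap
  have hpre : ⇑K.mkQ ⁻¹' ((Submodule.map K.mkQ S : Submodule ℝ (V ⧸ K)) : Set (V ⧸ K))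
      = (S : Set V) := by
    ext x
    simp only [Set.mem_preimage, SetLike.mem_coe, Submodule.mem_map]
    constructor
    · rintro ⟨s, hs, hsx⟩
      have hxs : x - s ∈ K := by
        rw [Submodule.mkQ_apply, Submodule.mkQ_apply] at hsx
        exact (Submodule.Quotient.eq K).mp hsx.symm
      have := S.add_mem hs (hKS hxs)
      rwa [add_sub_cancel] at this
    · intro hx; exact ⟨x, hx, rfl⟩
  rw [← hq.isClosed_preimage, hpre]
  exact hS



/-- **Commutativity theorem.** Assume the system `(E, A)` is normal
((N1) and (N2)).  Then the induced maps `J_U : U₁ ⧸ (ker E ∩ U₁) → U ⧸ ker E` and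
`J_W : W₁ ⧸ closure(A(ker E ∩ U₁)) → W ⧸ closure(A(ker E))` are Banach-space
isomorphisms onto the closed subspaces
`U' = {u + ker E : A u ∈ closure(ran E + A(ker E))}` and
`W' = closure(image of ran E in W ⧸ closure(A(ker E)))` respectively, and they
intertwine the doubly reduced operators: for `u ∈ U₁`,
`J_W(E u + closure(A(ker E ∩ U₁))) = E u + closure(A(ker E))` and likewise for `A`.
Hence the systems `(E_cred1_ored1, A_cred1_ored1)` and `(E_ored1_cred1, A_ored1_cred1)`
are equivalent via `(J_U, J_W)`. -/
theorem commutativity_of_reductions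
    {U W : Type*} [NormedAddCommGroup U] [NormedSpace ℝ U] [CompleteSpace U]
    [NormedAddCommGroup W] [NormedSpace ℝ W] [CompleteSpace W]
    (E A : U →L[ℝ] W)
    -- (N1)
    (hN1 : (LinearMap.range (E : U →ₗ[ℝ] W)).topologicalClosure ⊔ Submodule.map (A : U →ₗ[ℝ] W) (LinearMap.ker (E : U →ₗ[ℝ] W))
        = (LinearMap.range (E : U →ₗ[ℝ] W) ⊔ Submodule.map (A : U →ₗ[ℝ] W) (LinearMap.ker (E : U →ₗ[ℝ] W))).topologicalClosure)
    -- (N2)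
    (hN2 : ((LinearMap.range (E : U →ₗ[ℝ] W)).topologicalClosure ⊓
          Submodule.map (A : U →ₗ[ℝ] W) (LinearMap.ker (E : U →ₗ[ℝ] W))).topologicalClosure
        = (LinearMap.range (E : U →ₗ[ℝ] W)).topologicalClosure ⊓
          (Submodule.map (A : U →ₗ[ℝ] W) (LinearMap.ker (E : U →ₗ[ℝ] W))).topologicalClosure)
    -- J_U : U₁ ⧸ (ker E ∩ U₁) → U ⧸ ker E, induced by the inclusion U₁ ⊆ U
    (JU : (↥(Submodule.comap (A : U →ₗ[ℝ] W) (LinearMap.range (E : U →ₗ[ℝ] W)).topologicalClosure) ⧸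
            Submodule.comap
              (Submodule.comap (A : U →ₗ[ℝ] W) (LinearMap.range (E : U →ₗ[ℝ] W)).topologicalClosure).subtype
              (LinearMap.ker (E : U →ₗ[ℝ] W)))
          →L[ℝ] (U ⧸ LinearMap.ker (E : U →ₗ[ℝ] W)))
    (hJU : ∀ u : ↥(Submodule.comap (A : U →ₗ[ℝ] W) (LinearMap.range (E : U →ₗ[ℝ] W)).topologicalClosure),
        JU (Submodule.Quotient.mk u) = Submodule.Quotient.mk (u : U))
    -- J_W : W₁ ⧸ closure(A(ker E ∩ U₁)) → W ⧸ closure(A(ker E)), induced by W₁ ⊆ W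
    (JW : (↥((LinearMap.range (E : U →ₗ[ℝ] W)).topologicalClosure) ⧸
            Submodule.comap ((LinearMap.range (E : U →ₗ[ℝ] W)).topologicalClosure).subtype
              ((Submodule.map (A : U →ₗ[ℝ] W) (LinearMap.ker (E : U →ₗ[ℝ] W) ⊓
                Submodule.comap (A : U →ₗ[ℝ] W) (LinearMap.range (E : U →ₗ[ℝ] W)).topologicalClosure)).topologicalClosure))
          →L[ℝ] (W ⧸ (Submodule.map (A : U →ₗ[ℝ] W) (LinearMap.ker (E : U →ₗ[ℝ] W))).topologicalClosure))
    (hJW : ∀ w : ↥((LinearMap.range (E : U →ₗ[ℝ] W)).topologicalClosure),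
        JW (Submodule.Quotient.mk w) = Submodule.Quotient.mk (w : W)) :
    -- U' is closed and J_U is an isomorphism onto U'
    IsClosed ((Submodule.map (LinearMap.ker (E : U →ₗ[ℝ] W)).mkQ
        (Submodule.comap (A : U →ₗ[ℝ] W)
          (LinearMap.range (E : U →ₗ[ℝ] W) ⊔ Submodule.map (A : U →ₗ[ℝ] W) (LinearMap.ker (E : U →ₗ[ℝ] W))).topologicalClosure)) :
        Set (U ⧸ LinearMap.ker (E : U →ₗ[ℝ] W)))
    ∧ Topology.IsClosedEmbedding ⇑JU
    ∧ LinearMap.range JU.toLinearMap =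
        Submodule.map (LinearMap.ker (E : U →ₗ[ℝ] W)).mkQ
          (Submodule.comap (A : U →ₗ[ℝ] W)
            (LinearMap.range (E : U →ₗ[ℝ] W) ⊔ Submodule.map (A : U →ₗ[ℝ] W) (LinearMap.ker (E : U →ₗ[ℝ] W))).topologicalClosure)
    -- J_W is an isomorphism onto the closed subspace W'
    ∧ Topology.IsClosedEmbedding ⇑JW
    ∧ LinearMap.range JW.toLinearMap =
        (Submodule.map ((Submodule.map (A : U →ₗ[ℝ] W) (LinearMap.ker (E : U →ₗ[ℝ] W))).topologicalClosure).mkQ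
          (LinearMap.range (E : U →ₗ[ℝ] W))).topologicalClosure
    -- intertwining of the doubly reduced operators via (J_U, J_W)
    ∧ (∀ (u : U),
        u ∈ Submodule.comap (A : U →ₗ[ℝ] W) (LinearMap.range (E : U →ₗ[ℝ] W)).topologicalClosure →
        ∀ (hEu : E u ∈ (LinearMap.range (E : U →ₗ[ℝ] W)).topologicalClosure)
          (hAu : A u ∈ (LinearMap.range (E : U →ₗ[ℝ] W)).topologicalClosure),
        JW (Submodule.Quotient.mk ⟨E u, hEu⟩) = Submodule.Quotient.mk (E u)
        ∧ JW (Submodule.Quotient.mk ⟨A u, hAu⟩) = Submodule.Quotient.mk (A u)) := by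
  -- basic closedness facts
  have hCclosed : IsClosed (((LinearMap.range (E : U →ₗ[ℝ] W)).topologicalClosure) : Set W) := Submodule.isClosed_topologicalClosure _
  have hKclosed : IsClosed ((LinearMap.ker (E : U →ₗ[ℝ] W)) : Set U) := ContinuousLinearMap.isClosed_ker E
  have hU1closed : IsClosed ((Submodule.comap (A : U →ₗ[ℝ] W) (LinearMap.range (E : U →ₗ[ℝ] W)).topologicalClosure) : Set U) := hCclosed.preimage A.continuous
  -- Part 1: U' is closed
  have hKS : (LinearMap.ker (E : U →ₗ[ℝ] W)) ≤ Submodule.comap (A : U →ₗ[ℝ] W) ((LinearMap.range (E : U →ₗ[ℝ] W)) ⊔ (Submodule.map (A : U →ₗ[ℝ] W) (LinearMap.ker (E : U →ₗ[ℝ] W)))).topologicalClosure := by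
    intro k hk
    exact Submodule.mem_comap.mpr (Submodule.le_topologicalClosure _
      (Submodule.mem_sup_right (Submodule.mem_map_of_mem hk)))
  have hSclosed : IsClosed ((Submodule.comap (A : U →ₗ[ℝ] W) ((LinearMap.range (E : U →ₗ[ℝ] W)) ⊔ (Submodule.map (A : U →ₗ[ℝ] W) (LinearMap.ker (E : U →ₗ[ℝ] W)))).topologicalClosure : Submodule ℝ U) : Set U) :=
    (Submodule.isClosed_topologicalClosure _).preimage A.continuous
  have part1 : IsClosed ((Submodule.map (LinearMap.ker (E : U →ₗ[ℝ] W)).mkQ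
      (Submodule.comap (A : U →ₗ[ℝ] W) ((LinearMap.range (E : U →ₗ[ℝ] W)) ⊔ (Submodule.map (A : U →ₗ[ℝ] W) (LinearMap.ker (E : U →ₗ[ℝ] W)))).topologicalClosure) : Submodule ℝ (U ⧸ (LinearMap.ker (E : U →ₗ[ℝ] W)))) : Set (U ⧸ (LinearMap.ker (E : U →ₗ[ℝ] W)))) :=
    aux_isClosed_map_mkQ (LinearMap.ker (E : U →ₗ[ℝ] W)) _ hKS hSclosed
  -- Part 3: range of JU
  have part3 : LinearMap.range JU.toLinearMap =
      Submodule.map (LinearMap.ker (E : U →ₗ[ℝ] W)).mkQ (Submodule.comap (A : U →ₗ[ℝ] W) ((LinearMap.range (E : U →ₗ[ℝ] W)) ⊔ (Submodule.map (A : U →ₗ[ℝ] W) (LinearMap.ker (E : U →ₗ[ℝ] W)))).topologicalClosure) := by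
    apply le_antisymm
    · rintro x ⟨q, rfl⟩
      obtain ⟨u, rfl⟩ := Submodule.Quotient.mk_surjective _ q
      rw [ContinuousLinearMap.coe_coe, hJU]
      refine Submodule.mem_map.mpr ⟨(u : U), ?_, rfl⟩
      exact Submodule.mem_comap.mpr
        ((Submodule.topologicalClosure_mono le_sup_left) u.2)
    · rintro x ⟨u, hu, rfl⟩
      have hu' : A u ∈ ((LinearMap.range (E : U →ₗ[ℝ] W)).topologicalClosure) ⊔ (Submodule.map (A : U →ₗ[ℝ] W) (LinearMap.ker (E : U →ₗ[ℝ] W))) := by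
        rw [hN1]; exact hu
      obtain ⟨c, hc, n, hn, hcn⟩ := Submodule.mem_sup.mp hu'
      obtain ⟨k, hk, rfl⟩ := Submodule.mem_map.mp hn
      have huk : u - k ∈ (Submodule.comap (A : U →ₗ[ℝ] W) (LinearMap.range (E : U →ₗ[ℝ] W)).topologicalClosure) := by
        rw [Submodule.mem_comap, map_sub, ContinuousLinearMap.coe_coe]
        have hAc : A u - A k = c := by rw [← hcn, ContinuousLinearMap.coe_coe]; abel
        rw [hAc]
        exact hc
      refine ⟨Submodule.Quotient.mk ⟨u - k, huk⟩, ?_⟩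
      rw [ContinuousLinearMap.coe_coe, hJU, Submodule.mkQ_apply]
      refine (Submodule.Quotient.eq _).mpr ?_
      have huku : u - k - u = -k := by abel
      rw [huku]
      exact (LinearMap.ker (E : U →ₗ[ℝ] W)).neg_mem hk
  -- Injectivity of JU
  have hJUinj : Function.Injective ⇑JU := by
    intro x y hxy
    obtain ⟨u, rfl⟩ := Submodule.Quotient.mk_surjective _ x
    obtain ⟨v, rfl⟩ := Submodule.Quotient.mk_surjective _ y
    rw [hJU, hJU] at hxy
    have h1 : (u : U) - v ∈ (LinearMap.ker (E : U →ₗ[ℝ] W)) := (Submodule.Quotient.eq _).mp hxy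
    refine (Submodule.Quotient.eq _).mpr ?_
    rw [Submodule.mem_comap]
    simpa using h1
  -- Part 2: JU is a closed embedding
  haveI : IsClosed ((Submodule.comap (Submodule.comap (A : U →ₗ[ℝ] W) (LinearMap.range (E : U →ₗ[ℝ] W)).topologicalClosure).subtype (LinearMap.ker (E : U →ₗ[ℝ] W)) : Submodule ℝ (Submodule.comap (A : U →ₗ[ℝ] W) (LinearMap.range (E : U →ₗ[ℝ] W)).topologicalClosure)) : Set (Submodule.comap (A : U →ₗ[ℝ] W) (LinearMap.range (E : U →ₗ[ℝ] W)).topologicalClosure)) :=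
    hKclosed.preimage continuous_subtype_val
  haveI : CompleteSpace (Submodule.comap (A : U →ₗ[ℝ] W) (LinearMap.range (E : U →ₗ[ℝ] W)).topologicalClosure) := hU1closed.completeSpace_coe
  have part2 : Topology.IsClosedEmbedding ⇑JU := by
    apply aux_closedEmbedding JU hJUinj
    rw [show Set.range ⇑JU = ((LinearMap.range JU.toLinearMap : Submodule ℝ (U ⧸ (LinearMap.ker (E : U →ₗ[ℝ] W)))) : Set (U ⧸ (LinearMap.ker (E : U →ₗ[ℝ] W)))) from
      (LinearMap.coe_range _).symm, part3]
    exact part1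
  -- sup with closure of N
  have hCQ : ((LinearMap.range (E : U →ₗ[ℝ] W)).topologicalClosure) ⊔ (Submodule.map (A : U →ₗ[ℝ] W) (LinearMap.ker (E : U →ₗ[ℝ] W))).topologicalClosure = ((LinearMap.range (E : U →ₗ[ℝ] W)) ⊔ (Submodule.map (A : U →ₗ[ℝ] W) (LinearMap.ker (E : U →ₗ[ℝ] W)))).topologicalClosure := by
    apply le_antisymm
    · exact sup_le (Submodule.topologicalClosure_mono le_sup_left)
        (Submodule.topologicalClosure_mono le_sup_right)
    · rw [← hN1]
      exact sup_le_sup_left (Submodule.le_topologicalClosure _) ((LinearMap.range (E : U →ₗ[ℝ] W)).topologicalClosure)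
  have hmapCQ : Submodule.map (Submodule.map (A : U →ₗ[ℝ] W) (LinearMap.ker (E : U →ₗ[ℝ] W))).topologicalClosure.mkQ (((LinearMap.range (E : U →ₗ[ℝ] W)).topologicalClosure) ⊔ (Submodule.map (A : U →ₗ[ℝ] W) (LinearMap.ker (E : U →ₗ[ℝ] W))).topologicalClosure)
      = Submodule.map (Submodule.map (A : U →ₗ[ℝ] W) (LinearMap.ker (E : U →ₗ[ℝ] W))).topologicalClosure.mkQ ((LinearMap.range (E : U →ₗ[ℝ] W)).topologicalClosure) := by
    rw [Submodule.map_sup]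
    have hbot : Submodule.map (Submodule.map (A : U →ₗ[ℝ] W) (LinearMap.ker (E : U →ₗ[ℝ] W))).topologicalClosure.mkQ (Submodule.map (A : U →ₗ[ℝ] W) (LinearMap.ker (E : U →ₗ[ℝ] W))).topologicalClosure = ⊥ := by
      apply le_antisymm _ bot_le
      rintro x ⟨q, hq, rfl⟩
      rw [Submodule.mem_bot, Submodule.mkQ_apply, Submodule.Quotient.mk_eq_zero]; exact hq
    rw [hbot, sup_bot_eq]
  have hmapCclosed : IsClosed ((Submodule.map (Submodule.map (A : U →ₗ[ℝ] W) (LinearMap.ker (E : U →ₗ[ℝ] W))).topologicalClosure.mkQ ((LinearMap.range (E : U →ₗ[ℝ] W)).topologicalClosure) :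
      Submodule ℝ (W ⧸ (Submodule.map (A : U →ₗ[ℝ] W) (LinearMap.ker (E : U →ₗ[ℝ] W))).topologicalClosure)) : Set (W ⧸ (Submodule.map (A : U →ₗ[ℝ] W) (LinearMap.ker (E : U →ₗ[ℝ] W))).topologicalClosure)) := by
    rw [← hmapCQ]
    apply aux_isClosed_map_mkQ _ _ le_sup_right
    rw [hCQ]
    exact Submodule.isClosed_topologicalClosure _
  -- Part 5 : range of JW
  have part5 : LinearMap.range JW.toLinearMap
      = (Submodule.map (Submodule.map (A : U →ₗ[ℝ] W) (LinearMap.ker (E : U →ₗ[ℝ] W))).topologicalClosure.mkQ (LinearMap.range (E : U →ₗ[ℝ] W))).topologicalClosure := by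
    have hrange : LinearMap.range JW.toLinearMap = Submodule.map (Submodule.map (A : U →ₗ[ℝ] W) (LinearMap.ker (E : U →ₗ[ℝ] W))).topologicalClosure.mkQ ((LinearMap.range (E : U →ₗ[ℝ] W)).topologicalClosure) := by
      apply le_antisymm
      · rintro x ⟨q, rfl⟩
        obtain ⟨w, rfl⟩ := Submodule.Quotient.mk_surjective _ q
        rw [ContinuousLinearMap.coe_coe, hJW]
        exact Submodule.mem_map.mpr ⟨(w : W), w.2, rfl⟩
      · rintro x ⟨w, hw, rfl⟩
        exact ⟨Submodule.Quotient.mk ⟨w, hw⟩, by rw [ContinuousLinearMap.coe_coe, hJW, Submodule.mkQ_apply]⟩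
    rw [hrange]
    apply le_antisymm
    · rintro x ⟨w, hw, rfl⟩
      have hw' : w ∈ closure (((LinearMap.range (E : U →ₗ[ℝ] W)) : Submodule ℝ W) : Set W) := by
        rw [← Submodule.topologicalClosure_coe]
        exact hw
      have hcont : Continuous ⇑(Submodule.map (A : U →ₗ[ℝ] W) (LinearMap.ker (E : U →ₗ[ℝ] W))).topologicalClosure.mkQ :=
        (Submodule.isOpenQuotientMap_mkQ _).continuous
      have himg : (Submodule.map (A : U →ₗ[ℝ] W) (LinearMap.ker (E : U →ₗ[ℝ] W))).topologicalClosure.mkQ w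
          ∈ closure (⇑(Submodule.map (A : U →ₗ[ℝ] W) (LinearMap.ker (E : U →ₗ[ℝ] W))).topologicalClosure.mkQ '' (((LinearMap.range (E : U →ₗ[ℝ] W)) : Submodule ℝ W) : Set W)) :=
        image_closure_subset_closure_image hcont (Set.mem_image_of_mem _ hw')
      rw [← SetLike.mem_coe, Submodule.topologicalClosure_coe, Submodule.map_coe]
      exact himg
    · exact Submodule.topologicalClosure_minimal _
        (Submodule.map_mono (Submodule.le_topologicalClosure _)) hmapCclosed
  -- Injectivity of JW
  have hM : ((LinearMap.range (E : U →ₗ[ℝ] W)).topologicalClosure) ⊓ (Submodule.map (A : U →ₗ[ℝ] W) (LinearMap.ker (E : U →ₗ[ℝ] W))).topologicalClosure ≤ (Submodule.map (A : U →ₗ[ℝ] W) ((LinearMap.ker (E : U →ₗ[ℝ] W)) ⊓ (Submodule.comap (A : U →ₗ[ℝ] W) (LinearMap.range (E : U →ₗ[ℝ] W)).topologicalClosure))).topologicalClosure := by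
    rw [← hN2]
    apply Submodule.topologicalClosure_mono
    rintro x hx
    obtain ⟨hxC, hxN⟩ := Submodule.mem_inf.mp hx
    obtain ⟨k, hk, rfl⟩ := Submodule.mem_map.mp hxN
    exact Submodule.mem_map.mpr ⟨k, Submodule.mem_inf.mpr ⟨hk, Submodule.mem_comap.mpr hxC⟩, rfl⟩
  have hJWinj : Function.Injective ⇑JW := by
    intro x y hxy
    obtain ⟨w, rfl⟩ := Submodule.Quotient.mk_surjective _ x
    obtain ⟨v, rfl⟩ := Submodule.Quotient.mk_surjective _ y
    rw [hJW, hJW] at hxy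
    have h1 : (w : W) - v ∈ (Submodule.map (A : U →ₗ[ℝ] W) (LinearMap.ker (E : U →ₗ[ℝ] W))).topologicalClosure := (Submodule.Quotient.eq _).mp hxy
    have h2 : (w : W) - v ∈ ((LinearMap.range (E : U →ₗ[ℝ] W)).topologicalClosure) := ((LinearMap.range (E : U →ₗ[ℝ] W)).topologicalClosure).sub_mem w.2 v.2
    refine (Submodule.Quotient.eq _).mpr ?_
    rw [Submodule.mem_comap]
    simpa using hM (Submodule.mem_inf.mpr ⟨h2, h1⟩)
  -- Part 4 : JW is a closed embedding
  haveI : IsClosed (((Submodule.map (A : U →ₗ[ℝ] W) (LinearMap.ker (E : U →ₗ[ℝ] W))).topologicalClosure : Submodule ℝ W) : Set W) :=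
    Submodule.isClosed_topologicalClosure _
  haveI : IsClosed ((Submodule.comap ((LinearMap.range (E : U →ₗ[ℝ] W)).topologicalClosure).subtype
      (Submodule.map (A : U →ₗ[ℝ] W) ((LinearMap.ker (E : U →ₗ[ℝ] W)) ⊓ (Submodule.comap (A : U →ₗ[ℝ] W) (LinearMap.range (E : U →ₗ[ℝ] W)).topologicalClosure))).topologicalClosure : Submodule ℝ ((LinearMap.range (E : U →ₗ[ℝ] W)).topologicalClosure)) : Set ((LinearMap.range (E : U →ₗ[ℝ] W)).topologicalClosure)) :=
    (Submodule.isClosed_topologicalClosure _).preimage continuous_subtype_val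
  haveI : CompleteSpace ((LinearMap.range (E : U →ₗ[ℝ] W)).topologicalClosure) := hCclosed.completeSpace_coe
  have part4 : Topology.IsClosedEmbedding ⇑JW := by
    apply aux_closedEmbedding JW hJWinj
    rw [show Set.range ⇑JW = ((LinearMap.range JW.toLinearMap :
        Submodule ℝ (W ⧸ (Submodule.map (A : U →ₗ[ℝ] W) (LinearMap.ker (E : U →ₗ[ℝ] W))).topologicalClosure)) : Set (W ⧸ (Submodule.map (A : U →ₗ[ℝ] W) (LinearMap.ker (E : U →ₗ[ℝ] W))).topologicalClosure)) from
      (LinearMap.coe_range _).symm, part5]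
    exact Submodule.isClosed_topologicalClosure _
  exact ⟨part1, part2, part3, part4, part5,
    fun u hu hEu hAu => ⟨hJW ⟨E u, hEu⟩, hJW ⟨A u, hAu⟩⟩⟩
end

section
/- Let U and W be Banach spaces, E, A : U → W bounded linear operators, and U₁ := {u ∈ U : A u ∈ closure(ran E)}. Assume the system (E, A) is normal, i.e., conditions (N1) and (N2) hold. Then: (a) (for every w ∈ W there exists u ∈ U with w − A u ∈ closure(ran E)) if and only if (for every w ∈ W there exists u ∈ U with w − A u ∈ closure(ran E + A(ker E))); and (b) (A is injective on ker E and A(ker E) is closed in W) if and only if (A is injective on ker E ∩ U₁ and A(ker E ∩ U₁) is closed in W). (These equivalences express that [A_ored1] is invertible iff [A_cred1_ored1] is invertible, and [A_cred1] is invertible iff [A_ored1_cred1] is invertible.) -/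
/-- Assume the system `(E, A)` is normal ((N1) and (N2)), and let
`U₁ = {u : A u ∈ closure(ran E)}`.  Then:
(a) `[A_ored1]` is invertible iff `[A_cred1_ored1]` is invertible, i.e.
`(∀ w, ∃ u, w - A u ∈ closure(ran E)) ↔ (∀ w, ∃ u, w - A u ∈ closure(ran E + A(ker E)))`;
(b) `[A_cred1]` is invertible iff `[A_ored1_cred1]` is invertible, i.e.
(`A` injective on `ker E` and `A(ker E)` closed) ↔
(`A` injective on `ker E ∩ U₁` and `A(ker E ∩ U₁)` closed). -/
theorem pivot_invertibility_equiv_of_normal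
    {U W : Type*} [NormedAddCommGroup U] [NormedSpace ℝ U] [CompleteSpace U]
    [NormedAddCommGroup W] [NormedSpace ℝ W] [CompleteSpace W]
    (E A : U →L[ℝ] W)
    (hN1 : (LinearMap.range (E : U →ₗ[ℝ] W)).topologicalClosure ⊔ Submodule.map (A : U →ₗ[ℝ] W) (LinearMap.ker (E : U →ₗ[ℝ] W))
        = (LinearMap.range (E : U →ₗ[ℝ] W) ⊔ Submodule.map (A : U →ₗ[ℝ] W) (LinearMap.ker (E : U →ₗ[ℝ] W))).topologicalClosure)
    (hN2 : ((LinearMap.range (E : U →ₗ[ℝ] W)).topologicalClosure ⊓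
          Submodule.map (A : U →ₗ[ℝ] W) (LinearMap.ker (E : U →ₗ[ℝ] W))).topologicalClosure
        = (LinearMap.range (E : U →ₗ[ℝ] W)).topologicalClosure ⊓
          (Submodule.map (A : U →ₗ[ℝ] W) (LinearMap.ker (E : U →ₗ[ℝ] W))).topologicalClosure) :
    ((∀ w : W, ∃ u : U, w - A u ∈ closure ((LinearMap.range (E : U →ₗ[ℝ] W) : Set W))) ↔
      (∀ w : W, ∃ u : U, w - A u ∈
        closure ((LinearMap.range (E : U →ₗ[ℝ] W) ⊔ Submodule.map (A : U →ₗ[ℝ] W) (LinearMap.ker (E : U →ₗ[ℝ] W)) : Submodule ℝ W) :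
          Set W)))
    ∧ ((Set.InjOn A (LinearMap.ker (E : U →ₗ[ℝ] W) : Set U)
          ∧ IsClosed ((Submodule.map (A : U →ₗ[ℝ] W) (LinearMap.ker (E : U →ₗ[ℝ] W))) : Set W)) ↔
        (Set.InjOn A ((LinearMap.ker (E : U →ₗ[ℝ] W) ⊓
            Submodule.comap (A : U →ₗ[ℝ] W) (LinearMap.range (E : U →ₗ[ℝ] W)).topologicalClosure : Submodule ℝ U) : Set U)
          ∧ IsClosed ((Submodule.map (A : U →ₗ[ℝ] W) (LinearMap.ker (E : U →ₗ[ℝ] W) ⊓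
              Submodule.comap (A : U →ₗ[ℝ] W) (LinearMap.range (E : U →ₗ[ℝ] W)).topologicalClosure)) : Set W))) := by
  set R := LinearMap.range (E : U →ₗ[ℝ] W)
  set Rc := R.topologicalClosure with hRc
  set M := Submodule.map (A : U →ₗ[ℝ] W) (LinearMap.ker (E : U →ₗ[ℝ] W)) with hMdef
  have hM1 : Submodule.map (A : U →ₗ[ℝ] W) (LinearMap.ker (E : U →ₗ[ℝ] W) ⊓ Submodule.comap (A : U →ₗ[ℝ] W) Rc) = Rc ⊓ M := by
    ext w
    simp only [Submodule.mem_map, Submodule.mem_inf, Submodule.mem_comap, hMdef]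
    constructor
    · rintro ⟨u, ⟨hk, hc⟩, rfl⟩
      exact ⟨hc, ⟨u, hk, rfl⟩⟩
    · rintro ⟨hw, u, hk, rfl⟩
      exact ⟨u, ⟨hk, hw⟩, rfl⟩
  constructor
  · constructor
    · intro h w
      obtain ⟨u, hu⟩ := h w
      refine ⟨u, closure_mono ?_ hu⟩
      exact fun x hx => Submodule.mem_sup_left hx
    · intro h w
      obtain ⟨u, hu⟩ := h w
      rw [← Submodule.topologicalClosure_coe, ← hN1] at hu
      obtain ⟨c, hc, m, hm, hcm⟩ := Submodule.mem_sup.mp hu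
      obtain ⟨k, hk, rfl⟩ := hm
      refine ⟨u + k, ?_⟩
      have hwc : w - A (u + k) = c := by
        have hc' : c = (w - A u) - A k := eq_sub_of_add_eq hcm
        rw [map_add, hc']; abel
      rw [hwc, ← Submodule.topologicalClosure_coe]
      exact hc
  · constructor
    · rintro ⟨hinj, hcl⟩
      refine ⟨hinj.mono ?_, ?_⟩
      · exact fun x hx => hx.1
      · rw [hM1, Submodule.coe_inf]
        exact R.isClosed_topologicalClosure.inter hcl
    · rintro ⟨hinj, hcl⟩
      constructor
      · intro x hx y hy hxy
        have hsub : x - y ∈ LinearMap.ker (E : U →ₗ[ℝ] W) ⊓ Submodule.comap (A : U →ₗ[ℝ] W) Rc := by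
          refine ⟨sub_mem hx hy, ?_⟩
          have : A (x - y) = 0 := by rw [map_sub, hxy, sub_self]
          simp [Submodule.mem_comap, this]
        have h0 : (0 : U) ∈ LinearMap.ker (E : U →ₗ[ℝ] W) ⊓ Submodule.comap (A : U →ₗ[ℝ] W) Rc := zero_mem _
        have : x - y = 0 := hinj hsub h0 (by rw [map_sub, hxy, sub_self, map_zero])
        exact sub_eq_zero.mp this
      · -- M is closed
        have hM1cl : IsClosed ((Rc ⊓ M : Submodule ℝ W) : Set W) := hM1 ▸ hcl
        have hMsub : M.topologicalClosure ≤ M := by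
          intro w hw
          have hw' : w ∈ (R ⊔ M).topologicalClosure := by
            exact Submodule.topologicalClosure_mono le_sup_right hw
          rw [← hN1] at hw'
          obtain ⟨c, hc, m, hm, hcm⟩ := Submodule.mem_sup.mp hw'
          obtain ⟨k, hk, rfl⟩ := hm
          have hcM : c ∈ M.topologicalClosure := by
            have h1 : A k ∈ M.topologicalClosure := M.le_topologicalClosure ⟨k, hk, rfl⟩
            have : c = w - A k := by rw [← hcm, ContinuousLinearMap.coe_coe]; abel
            rw [this]
            exact sub_mem hw h1
          have hc2 : c ∈ (Rc ⊓ M).topologicalClosure := by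
            rw [hN2]; exact ⟨hc, hcM⟩
          have hc3 : c ∈ Rc ⊓ M := by
            have := Submodule.topologicalClosure_coe (Rc ⊓ M)
            have h4 : (((Rc ⊓ M : Submodule ℝ W).topologicalClosure : Submodule ℝ W) : Set W)
                = ((Rc ⊓ M : Submodule ℝ W) : Set W) := by
              rw [this, hM1cl.closure_eq]
            exact (Set.ext_iff.mp h4 c).mp hc2
          obtain ⟨k', hk', hck'⟩ := hc3.2
          exact ⟨k + k', add_mem hk hk', by rw [map_add, hck', ← hcm]; abel⟩
        have : M.topologicalClosure = M := le_antisymm hMsub M.le_topologicalClosure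
        rw [← this, Submodule.topologicalClosure_coe]
        exact isClosed_closure
end

section
/- Let U and W be complex Banach spaces, E, A : U → W bounded linear operators, W₁ := closure(ran E), and U₁ := {u ∈ U : A u ∈ closure(ran E)}. Assume that for every w ∈ W there exists u ∈ U with w − A u ∈ closure(ran E) (equivalently, the injective pivot operator [A_ored1] : U ⧸ U₁ → W ⧸ W₁ induced by A is bijective). Then for every λ ∈ ℂ, the operator λE + A : U → W is bijective if and only if its restriction to U₁, viewed as an operator from U₁ to W₁ (well-defined since (λE + A)(U₁) ⊆ W₁), is bijective. In other words, ρ(E, A) = ρ(E_ored1, A_ored1). -/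
/-- If the pivot operator `[A_ored1]` is bijective, i.e. for every
`w ∈ W` there is `u` with `w - A u ∈ closure(ran E)`, then for every `λ ∈ ℂ` the operator
`λE + A` is bijective iff its restriction, viewed as an operator from
`U₁ = {u : A u ∈ closure(ran E)}` to `W₁ = closure(ran E)`, is bijective; i.e.
`ρ(E, A) = ρ(E_ored1, A_ored1)`. -/
theorem resolvent_eq_observation_reduced
    {U W : Type*} [NormedAddCommGroup U] [NormedSpace ℂ U] [CompleteSpace U]
    [NormedAddCommGroup W] [NormedSpace ℂ W] [CompleteSpace W]
    (E A : U →L[ℂ] W)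
    (hpivot : ∀ w : W, ∃ u : U, w - A u ∈ closure ((LinearMap.range (E : U →ₗ[ℂ] W) : Set W))) :
    ∀ l : ℂ,
      ∀ F : ↥(Submodule.comap (A : U →ₗ[ℂ] W) (LinearMap.range (E : U →ₗ[ℂ] W)).topologicalClosure) →
            ↥((LinearMap.range (E : U →ₗ[ℂ] W)).topologicalClosure),
        (∀ u : ↥(Submodule.comap (A : U →ₗ[ℂ] W) (LinearMap.range (E : U →ₗ[ℂ] W)).topologicalClosure),
            (F u : W) = (l • E + A) (u : U)) →
        (Function.Bijective ⇑(l • E + A) ↔ Function.Bijective F) := by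
  intro l F hF
  have hEmem : ∀ u : U, E u ∈ (LinearMap.range (E : U →ₗ[ℂ] W)).topologicalClosure :=
    fun u => Submodule.le_topologicalClosure _ (LinearMap.mem_range_self (E : U →ₗ[ℂ] W) u)
  have hT : ∀ u : U, (l • E + A) u = l • E u + A u := fun u => rfl
  constructor
  · rintro ⟨hinj, hsurj⟩
    constructor
    · intro u v huv
      have h : (l • E + A) (u : U) = (l • E + A) (v : U) := by
        rw [← hF u, ← hF v, huv]
      exact Subtype.ext (hinj h)
    · rintro ⟨w, hw⟩
      obtain ⟨u, hu⟩ := hsurj w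
      have hAu : A u = w - l • E u := by
        have := hu
        rw [hT] at this
        rw [← this]; abel
      have hu1 : u ∈ Submodule.comap (A : U →ₗ[ℂ] W) (LinearMap.range (E : U →ₗ[ℂ] W)).topologicalClosure := by
        rw [Submodule.mem_comap, ContinuousLinearMap.coe_coe, hAu]
        exact (LinearMap.range (E : U →ₗ[ℂ] W)).topologicalClosure.sub_mem hw ((LinearMap.range (E : U →ₗ[ℂ] W)).topologicalClosure.smul_mem l (hEmem u))
      refine ⟨⟨u, hu1⟩, ?_⟩
      apply Subtype.ext
      rw [hF ⟨u, hu1⟩]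
      exact hu
  · rintro ⟨hinj, hsurj⟩
    constructor
    · intro u v huv
      have hd0 : (l • E + A) (u - v) = 0 := by
        rw [map_sub, huv, sub_self]
      have hd1 : u - v ∈ Submodule.comap (A : U →ₗ[ℂ] W) (LinearMap.range (E : U →ₗ[ℂ] W)).topologicalClosure := by
        rw [Submodule.mem_comap]
        have hA : A (u - v) = 0 - l • E (u - v) := by
          rw [hT] at hd0; rw [← hd0]; abel
        rw [ContinuousLinearMap.coe_coe, hA]
        exact (LinearMap.range (E : U →ₗ[ℂ] W)).topologicalClosure.sub_mem (LinearMap.range (E : U →ₗ[ℂ] W)).topologicalClosure.zero_mem ((LinearMap.range (E : U →ₗ[ℂ] W)).topologicalClosure.smul_mem l (hEmem _))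
      have h0 : F ⟨u - v, hd1⟩ = F 0 := by
        apply Subtype.ext
        rw [hF ⟨u - v, hd1⟩, hF 0]
        simp [hd0]
      have := hinj h0
      have : u - v = (0 : U) := congrArg Subtype.val this
      exact sub_eq_zero.mp this
    · intro w
      obtain ⟨u0, hu0⟩ := hpivot w
      have hu0' : w - A u0 ∈ (LinearMap.range (E : U →ₗ[ℂ] W)).topologicalClosure := by
        rwa [← Submodule.topologicalClosure_coe] at hu0
      have hwT : w - (l • E + A) u0 ∈ (LinearMap.range (E : U →ₗ[ℂ] W)).topologicalClosure := by
        have : w - (l • E + A) u0 = (w - A u0) - l • E u0 := by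
          rw [hT]; abel
        rw [this]
        exact (LinearMap.range (E : U →ₗ[ℂ] W)).topologicalClosure.sub_mem hu0' ((LinearMap.range (E : U →ₗ[ℂ] W)).topologicalClosure.smul_mem l (hEmem u0))
      obtain ⟨v, hv⟩ := hsurj ⟨w - (l • E + A) u0, hwT⟩
      refine ⟨(v : U) + u0, ?_⟩
      have hv' : (l • E + A) (v : U) = w - (l • E + A) u0 := by
        rw [← hF v, hv]
      rw [map_add, hv']
      abel
end

section
/- Let U and W be complex Banach spaces and E, A : U → W bounded linear operators. Assume that A is injective on ker E and that A(ker E) is closed in W (i.e., the pivot operator [A_cred1] : ker E → closure(A(ker E)), the restriction of A, is bijective). Then for every λ ∈ ℂ, the operator λE + A : U → W is bijective if and only if the induced operator from U ⧸ ker E to W ⧸ closure(A(ker E)) sending u + ker E to (λE + A)u + closure(A(ker E)) (well-defined since (λE + A)(ker E) ⊆ closure(A(ker E))) is bijective. In other words, ρ(E, A) = ρ(E_cred1, A_cred1). -/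
/-- If the pivot operator `[A_cred1]` is bijective, i.e. `A` is injective
on `ker E` and `A(ker E)` is closed, then for every `λ ∈ ℂ` the operator `λE + A` is
bijective iff the induced operator from `U ⧸ ker E` to `W ⧸ closure(A(ker E))` (sending
`u + ker E` to `(λE + A)u + closure(A(ker E))`) is bijective; i.e.
`ρ(E, A) = ρ(E_cred1, A_cred1)`. -/
theorem resolvent_eq_control_reduced
    {U W : Type*} [NormedAddCommGroup U] [NormedSpace ℂ U] [CompleteSpace U]
    [NormedAddCommGroup W] [NormedSpace ℂ W] [CompleteSpace W]
    (E A : U →L[ℂ] W)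
    (hinj : Set.InjOn A (LinearMap.ker (E : U →ₗ[ℂ] W) : Set U))
    (hclosed : IsClosed ((Submodule.map (A : U →ₗ[ℂ] W) (LinearMap.ker (E : U →ₗ[ℂ] W))) : Set W)) :
    ∀ l : ℂ,
      ∀ F : (U ⧸ LinearMap.ker (E : U →ₗ[ℂ] W)) →
            (W ⧸ (Submodule.map (A : U →ₗ[ℂ] W) (LinearMap.ker (E : U →ₗ[ℂ] W))).topologicalClosure),
        (∀ u : U, F (Submodule.Quotient.mk u) = Submodule.Quotient.mk ((l • E + A) u)) →
        (Function.Bijective ⇑(l • E + A) ↔ Function.Bijective F) := by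
  intro l F hF
  set T := l • E + A with hT
  have hMK : (Submodule.map (A : U →ₗ[ℂ] W) (LinearMap.ker (E : U →ₗ[ℂ] W))).topologicalClosure = Submodule.map (A : U →ₗ[ℂ] W) (LinearMap.ker (E : U →ₗ[ℂ] W)) :=
    IsClosed.submodule_topologicalClosure_eq hclosed
  have hTk : ∀ k ∈ LinearMap.ker (E : U →ₗ[ℂ] W), T k = A k := by
    intro k hk
    have hk0 : E k = 0 := LinearMap.mem_ker.mp hk
    simp [hT, hk0]
  constructor
  · rintro ⟨hi, hs⟩
    constructor
    · intro x y hxy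
      obtain ⟨u, rfl⟩ := Submodule.Quotient.mk_surjective _ x
      obtain ⟨v, rfl⟩ := Submodule.Quotient.mk_surjective _ y
      rw [hF, hF] at hxy
      have hmem : T u - T v ∈ (Submodule.map (A : U →ₗ[ℂ] W) (LinearMap.ker (E : U →ₗ[ℂ] W))).topologicalClosure :=
        (Submodule.Quotient.eq _).mp hxy
      rw [hMK] at hmem
      obtain ⟨k, hk, hAk⟩ := hmem
      have heq : T (u - v) = T k := by
        rw [hTk k hk, (id hAk : A k = T u - T v), map_sub]
      have huv : u - v = k := hi heq
      exact (Submodule.Quotient.eq _).mpr (huv ▸ hk)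
    · intro y
      obtain ⟨w, rfl⟩ := Submodule.Quotient.mk_surjective _ y
      obtain ⟨u, hu⟩ := hs w
      exact ⟨Submodule.Quotient.mk u, by rw [hF, hu]⟩
  · rintro ⟨hi, hs⟩
    constructor
    · intro u v huv
      have h1 : F (Submodule.Quotient.mk u) = F (Submodule.Quotient.mk v) := by
        rw [hF, hF, huv]
      have hm : u - v ∈ LinearMap.ker (E : U →ₗ[ℂ] W) := (Submodule.Quotient.eq _).mp (hi h1)
      have hA0 : A (u - v) = A 0 := by
        rw [← hTk (u - v) hm, map_sub, huv, sub_self, map_zero]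
      have : u - v = 0 := hinj hm (LinearMap.ker (E : U →ₗ[ℂ] W)).zero_mem hA0
      exact sub_eq_zero.mp this
    · intro w
      obtain ⟨x, hx⟩ := hs (Submodule.Quotient.mk w)
      obtain ⟨u, rfl⟩ := Submodule.Quotient.mk_surjective _ x
      rw [hF] at hx
      have hmem : T u - w ∈ (Submodule.map (A : U →ₗ[ℂ] W) (LinearMap.ker (E : U →ₗ[ℂ] W))).topologicalClosure :=
        (Submodule.Quotient.eq _).mp hx
      rw [hMK] at hmem
      obtain ⟨k, hk, hAk⟩ := hmem
      refine ⟨u - k, ?_⟩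
      rw [map_sub, hTk k hk, (id hAk : A k = T u - w)]
      abel
end

section
/- Let U and W be complex Banach spaces and E, A : U → W bounded linear operators. If A is not injective on ker E, or if A(ker E) is not closed in W (i.e., the pivot operator [A_cred1] : ker E → closure(A(ker E)) is not invertible), then for every λ ∈ ℂ the operator λE + A : U → W is not bijective; in particular the resolvent set ρ(E, A) is empty. -/
/-- If the pivot operator `[A_cred1]` is not invertible — i.e. `A` is
not injective on `ker E`, or `A(ker E)` is not closed — then no `λE + A` is bijective;
in particular the resolvent set `ρ(E, A)` is empty. -/
theorem resolvent_empty_of_ctrl_pivot_not_invertible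
    {U W : Type*} [NormedAddCommGroup U] [NormedSpace ℂ U] [CompleteSpace U]
    [NormedAddCommGroup W] [NormedSpace ℂ W] [CompleteSpace W]
    (E A : U →L[ℂ] W)
    (h : ¬ Set.InjOn A (LinearMap.ker (E : U →ₗ[ℂ] W) : Set U)
        ∨ ¬ IsClosed ((Submodule.map (A : U →ₗ[ℂ] W) (LinearMap.ker (E : U →ₗ[ℂ] W))) : Set W)) :
    ∀ l : ℂ, ¬ Function.Bijective ⇑(l • E + A) := by
  intro l hbij
  have hagree : ∀ x ∈ (LinearMap.ker (E : U →ₗ[ℂ] W) : Set U), (l • E + A) x = A x := by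
    intro x hx
    have hx0 : E x = 0 := hx
    simp [ContinuousLinearMap.add_apply, ContinuousLinearMap.smul_apply, hx0]
  rcases h with h1 | h2
  · apply h1
    intro x hx y hy hxy
    apply hbij.injective
    rw [hagree x hx, hagree y hy]
    exact hxy
  · apply h2
    -- the set A(ker E) equals image of the closed set ker E under the homeomorphism l•E+A
    have himg : ((Submodule.map (A : U →ₗ[ℂ] W) (LinearMap.ker (E : U →ₗ[ℂ] W))) : Set W)
        = (l • E + A) '' (LinearMap.ker (E : U →ₗ[ℂ] W) : Set U) := by
      ext w
      constructor
      · rintro ⟨x, hx, rfl⟩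
        exact ⟨x, hx, (hagree x hx)⟩
      · rintro ⟨x, hx, rfl⟩
        exact ⟨x, hx, (hagree x hx).symm⟩
    rw [himg]
    let e : U ≃L[ℂ] W := ContinuousLinearEquiv.ofBijective (l • E + A)
      (LinearMap.ker_eq_bot.mpr hbij.injective)
      (LinearMap.range_eq_top.mpr hbij.surjective)
    have hcoe : ⇑(l • E + A) = ⇑e := rfl
    rw [hcoe]
    exact e.toHomeomorph.isClosedMap _ (ContinuousLinearMap.isClosed_ker E)
end

section
/- Let U and H be real Hilbert spaces, D : U → H a bounded linear operator, and define E : U → U* (U* the continuous dual of U) by (E u)(v) = ⟪D u, D v⟫_H. Let A : U → U* be a bounded linear operator that is coercive: there exists c > 0 with (A u)(u) ≥ c‖u‖² for all u ∈ U. Assume moreover that A(ker E) is closed in U*. Then the system (E, A) has control index one: for every u ∈ U, E u ∈ closure(A(ker E)) implies u ∈ ker E (equivalently E u = 0). -/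
/-- **variational systems have control index one.** Let `U`, `H` be real
Hilbert spaces, `D : U → H` bounded, `E = D*D : U → U*` (i.e. `(E u)(v) = ⟪D u, D v⟫`),
and let `A : U → U*` be bounded and coercive.  If `A(ker E)` is closed in `U*`, then
`E u ∈ closure(A(ker E))` implies `u ∈ ker E`. -/
theorem variational_control_index_one
    {U H : Type*} [NormedAddCommGroup U] [InnerProductSpace ℝ U] [CompleteSpace U]
    [NormedAddCommGroup H] [InnerProductSpace ℝ H] [CompleteSpace H]
    (D : U →L[ℝ] H) (E A : U →L[ℝ] (U →L[ℝ] ℝ))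
    (hE : ∀ u v : U, E u v = (inner ℝ (D u) (D v) : ℝ))
    (hcoercive : ∃ c : ℝ, 0 < c ∧ ∀ u : U, c * ‖u‖ ^ 2 ≤ A u u)
    (hclosed : IsClosed ((Submodule.map (A : U →ₗ[ℝ] (U →L[ℝ] ℝ)) (LinearMap.ker (E : U →ₗ[ℝ] (U →L[ℝ] ℝ)))) : Set (U →L[ℝ] ℝ))) :
    ∀ u : U, E u ∈ (Submodule.map (A : U →ₗ[ℝ] (U →L[ℝ] ℝ)) (LinearMap.ker (E : U →ₗ[ℝ] (U →L[ℝ] ℝ)))).topologicalClosure →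
      u ∈ LinearMap.ker (E : U →ₗ[ℝ] (U →L[ℝ] ℝ)) := by
  intro u hu
  obtain ⟨c, hc, hco⟩ := hcoercive
  have h1 : E u ∈ Submodule.map (A : U →ₗ[ℝ] (U →L[ℝ] ℝ)) (LinearMap.ker (E : U →ₗ[ℝ] (U →L[ℝ] ℝ))) :=
    Submodule.topologicalClosure_minimal _ le_rfl hclosed hu
  obtain ⟨w, hw, hAw⟩ := h1
  have hEw : E w = 0 := hw
  have hDw : D w = 0 := by
    have := hE w w
    rw [hEw] at this
    simpa using (inner_self_eq_zero (𝕜 := ℝ)).mp this.symm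
  have hAww : A w w = 0 := by
    have := congrArg (fun f : U →L[ℝ] ℝ => f w) hAw
    change A w w = E u w at this
    rw [this, hE u w, hDw, inner_zero_right]
  have hw0 : w = 0 := by
    have h2 : c * ‖w‖ ^ 2 ≤ 0 := hAww ▸ hco w
    have hsq : ‖w‖ ^ 2 ≤ 0 := by
      have h3 : c * ‖w‖ ^ 2 ≤ c * 0 := by simpa using h2
      simpa using (mul_le_mul_iff_right₀ hc).mp h3
    have : ‖w‖ ^ 2 = 0 := le_antisymm hsq (sq_nonneg _)
    exact norm_eq_zero.mp (pow_eq_zero_iff (by norm_num) |>.mp this)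
  have : E u = 0 := by rw [← hAw, hw0, map_zero]
  exact this
end

section
/- Let U be a Banach space, W a real Hilbert space, and E, A : U → W bounded linear operators. Assume there exists β ∈ ℝ such that ⟪E u, A u⟫ ≤ β‖E u‖² for all u ∈ U. Then ⟪E u, A k⟫ = 0 for all u ∈ U and all k ∈ ker E; consequently ran E ∩ closure(A(ker E)) = {0}, i.e., the system (E, A) has control index one. -/
/-- Let `U` be a Banach space, `W` a real Hilbert space and
`E, A : U → W` bounded.  If `⟪E u, A u⟫ ≤ β‖E u‖²` for some `β` and all `u`, then
`⟪E u, A k⟫ = 0` for all `u ∈ U`, `k ∈ ker E`; consequently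
`ran E ∩ closure(A(ker E)) = {0}`, i.e. the system has control index one. -/
theorem control_index_one_of_semibounded
    {U W : Type*} [NormedAddCommGroup U] [NormedSpace ℝ U] [CompleteSpace U]
    [NormedAddCommGroup W] [InnerProductSpace ℝ W] [CompleteSpace W]
    (E A : U →L[ℝ] W)
    (h : ∃ β : ℝ, ∀ u : U, (inner ℝ (E u) (A u) : ℝ) ≤ β * ‖E u‖ ^ 2) :
    (∀ u : U, ∀ k ∈ LinearMap.ker (E : U →ₗ[ℝ] W), (inner ℝ (E u) (A k) : ℝ) = 0)
    ∧ LinearMap.range (E : U →ₗ[ℝ] W) ⊓ (Submodule.map (A : U →ₗ[ℝ] W) (LinearMap.ker (E : U →ₗ[ℝ] W))).topologicalClosure = ⊥ := by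
  obtain ⟨β, hβ⟩ := h
  have key : ∀ u : U, ∀ k ∈ LinearMap.ker (E : U →ₗ[ℝ] W), (inner ℝ (E u) (A k) : ℝ) = 0 := by
    intro u k hk
    have hEk : E k = 0 := hk
    by_contra hc
    set c : ℝ := inner ℝ (E u) (A k) with hcdef
    have hall : ∀ t : ℝ, (inner ℝ (E u) (A u) : ℝ) + t * c ≤ β * ‖E u‖ ^ 2 := by
      intro t
      have := hβ (u + t • k)
      simpa [hEk, inner_add_right, real_inner_smul_right, hcdef] using this
    set t := (β * ‖E u‖ ^ 2 - (inner ℝ (E u) (A u) : ℝ) + 1) / c with ht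
    have := hall t
    rw [ht, div_mul_cancel₀ _ hc] at this
    linarith
  refine ⟨key, ?_⟩
  rw [Submodule.eq_bot_iff]
  rintro w ⟨⟨u, rfl⟩, hw⟩
  set K := Submodule.map (A : U →ₗ[ℝ] W) (LinearMap.ker (E : U →ₗ[ℝ] W)) with hK
  have horth : E u ∈ Kᗮ := by
    intro y hy
    obtain ⟨k, hk, rfl⟩ := hy
    rw [real_inner_comm]
    exact key u k hk
  have hcl : K.topologicalClosure = Kᗮᗮ :=
    (Submodule.orthogonal_orthogonal_eq_closure K).symm
  rw [hcl] at hw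
  have : (inner ℝ (E u) (E u) : ℝ) = 0 := hw (E u) horth
  exact inner_self_eq_zero.mp this
end
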